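/- Consider the 2×2 transfer matrix G(s) with entries g₁₁ = γ₁ k₁/(1+τ₁ s), g₂₂ = γ₂ k₂/(1+τ₂ s), g₁₂ = (1−γ₂)k₁/((1+τ₃ s)(1+τ₁ s)), g₂₁ = (1−γ₁)k₂/((1+τ₄ s)(1+τ₂ s)), with all τᵢ, kᵢ > 0 and γ₁, γ₂ ∈ (0,1). Then det G(s) has a zero in the open right half plane if and only if γ₁ + γ₂ < 1, i.e., the determinant numerator (1+τ₃ s)(1+τ₄ s) γ₁γ₂ − (1−γ₁)(1−γ₂) has a positive real root exactly when γ₁+γ₂ < 1. -/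
import Mathlib


/-- The determinant numerator `p(s) = γ₁γ₂(1+τ₃ s)(1+τ₄ s) − (1−γ₁)(1−γ₂)` of the
quadruple-tank transfer matrix has a positive real root iff `γ₁ + γ₂ < 1`. -/
theorem stmt_5 (γ₁ γ₂ τ₃ τ₄ : ℝ) (hγ₁ : γ₁ ∈ Set.Ioo (0 : ℝ) 1)
    (hγ₂ : γ₂ ∈ Set.Ioo (0 : ℝ) 1) (hτ₃ : 0 < τ₃) (hτ₄ : 0 < τ₄) :
    (∃ s : ℝ, 0 < s ∧
        γ₁ * γ₂ * (1 + τ₃ * s) * (1 + τ₄ * s) - (1 - γ₁) * (1 - γ₂) = 0) ↔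
      γ₁ + γ₂ < 1 := by
  obtain ⟨h1, h2⟩ := hγ₁
  obtain ⟨h3, h4⟩ := hγ₂
  constructor
  · rintro ⟨s, hs, he⟩
    nlinarith [mul_pos hτ₃ hs, mul_pos hτ₄ hs, mul_pos (mul_pos hτ₃ hs) (mul_pos hτ₄ hs),
      mul_pos h1 h3]
  · intro hsum
    set f : ℝ → ℝ := fun s => γ₁ * γ₂ * (1 + τ₃ * s) * (1 + τ₄ * s) - (1 - γ₁) * (1 - γ₂)
      with hf
    have hcont : ContinuousOn f (Set.Icc 0 (1 + 1 / (γ₁ * γ₂ * τ₃ * τ₄))) := by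
      fun_prop
    have hden : 0 < γ₁ * γ₂ * τ₃ * τ₄ := by positivity
    have h0 : f 0 < 0 := by simp only [hf]; nlinarith
    have hM : 0 < f (1 + 1 / (γ₁ * γ₂ * τ₃ * τ₄)) := by
      simp only [hf]
      have key : γ₁ * γ₂ * τ₃ * τ₄ * (1 / (γ₁ * γ₂ * τ₃ * τ₄)) = 1 := by
        field_simp
      obtain ⟨M, hMdef⟩ : ∃ M : ℝ, M = 1 + 1 / (γ₁ * γ₂ * τ₃ * τ₄) := ⟨_, rfl⟩
      rw [← hMdef]
      have hM1 : 1 ≤ M := by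
        have : 0 < 1 / (γ₁ * γ₂ * τ₃ * τ₄) := by positivity
        linarith [hMdef.ge, hMdef.le]
      have hdM : γ₁ * γ₂ * τ₃ * τ₄ * M = γ₁ * γ₂ * τ₃ * τ₄ + 1 := by
        rw [hMdef]; field_simp
      have hMsq : γ₁ * γ₂ * τ₃ * τ₄ * (M * M) ≥ M := by
        nlinarith [hden]
      nlinarith [mul_pos hτ₃ hτ₄, mul_pos h1 h3, hMsq, hM1,
        mul_pos (mul_pos h1 h3) hτ₃, mul_pos (mul_pos h1 h3) hτ₄]
    have hle : (0:ℝ) ≤ 1 + 1 / (γ₁ * γ₂ * τ₃ * τ₄) := by positivity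
    have := intermediate_value_Ioo hle hcont
    have hmem : (0:ℝ) ∈ Set.Ioo (f 0) (f (1 + 1 / (γ₁ * γ₂ * τ₃ * τ₄))) := ⟨h0, hM⟩
    obtain ⟨s, hsmem, hfs⟩ := this hmem
    exact ⟨s, hsmem.1, hfs⟩
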